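/- Let γ be a nonzero real number and g real. Let L_0, L, X be the ℂ-linear endomorphisms of the space of 3×3 complex matrices given by L_0(ρ) := γ·(E_{02} ρ E_{20} − (1/2)(E_{22} ρ + ρ E_{22})), L(ρ) := −i g·((E_{21}+E_{12}) ρ − ρ (E_{21}+E_{12})), and X(ρ) := −(2 i g/γ)·((E_{12}−E_{21}) ρ + ρ (E_{12}−E_{21}) + 2 E_{01} ρ E_{20} − 2 E_{02} ρ E_{10}). Then L_0∘X − X∘L_0 = L. -/

import Mathlib

attribute [local instance] Matrix.linftyOpNormedAddCommGroup Matrix.linftyOpNormedSpace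

/-- The standard matrix unit `E_{ij}` (a `1` in row `i`, column `j`). -/
noncomputable def matUnit (i j : Fin 3) : Matrix (Fin 3) (Fin 3) ℂ :=
  Matrix.single i j 1

set_option maxHeartbeats 2000000 in
/-- the superoperator
`X(ρ) = -(2ig/γ)((E_{12}-E_{21})ρ + ρ(E_{12}-E_{21}) + 2 E_{01} ρ E_{20} - 2 E_{02} ρ E_{10})`
solves the commutator equation `[L_0, X] = L` of the three-level model. -/
theorem stmt17 (γ : ℝ) (hγ : γ ≠ 0) (g : ℝ)
    (L₀ L X : Matrix (Fin 3) (Fin 3) ℂ →L[ℂ] Matrix (Fin 3) (Fin 3) ℂ)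
    (hL₀ : ∀ ρ, L₀ ρ = (γ : ℂ) •
      (matUnit 0 2 * ρ * matUnit 2 0 -
        (1 / 2 : ℂ) • (matUnit 2 2 * ρ + ρ * matUnit 2 2)))
    (hL : ∀ ρ, L ρ = (-Complex.I * (g : ℂ)) •
      ((matUnit 2 1 + matUnit 1 2) * ρ - ρ * (matUnit 2 1 + matUnit 1 2)))
    (hX : ∀ ρ, X ρ = (-(2 * Complex.I * (g : ℂ) / (γ : ℂ))) •
      ((matUnit 1 2 - matUnit 2 1) * ρ + ρ * (matUnit 1 2 - matUnit 2 1) +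
        2 • (matUnit 0 1 * ρ * matUnit 2 0) - 2 • (matUnit 0 2 * ρ * matUnit 1 0))) :
    L₀ * X - X * L₀ = L := by
  ext ρ i j
  simp only [ContinuousLinearMap.sub_apply, ContinuousLinearMap.mul_apply,
    ContinuousLinearMap.coe_sub', Pi.sub_apply, hL₀, hL, hX, matUnit]
  have hγ' : (γ : ℂ) ≠ 0 := by exact_mod_cast hγ
  fin_cases i <;> fin_cases j <;>
    simp [Matrix.mul_apply, Matrix.single, Matrix.smul_apply, Matrix.sub_apply,
      Matrix.add_apply, Fin.sum_univ_three, smul_smul, two_smul] <;>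
    field_simp <;> ring
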